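/- Let M and A be two disjoint antichains in the power set of {1,...,n} with {1,...,n} ∉ M, and suppose that for every A ∈ A there is a unique M ∈ M with A ⊂ M (proper containment); write f(A) for this unique M. Then Σ_{M∈M} 1/C(n,|M|) + Σ_{A∈A} (1/C(n,|A|))·(1 − 1/(n−|A|)) ≤ 1. -/

import Mathlib

open Finset Nat
open scoped Classical

section Aux
variable {α β ι : Type*}

lemma symm_congr {c : α → ι} {d : β → ι} (F : ∀ i, {x // c x = i} ≃ {y // d y = i})
    {i j : ι} (h : i = j) (z : β) (hz : d z = i) :
    ((F i).symm ⟨z, hz⟩ : α) = ((F j).symm ⟨z, h ▸ hz⟩ : α) := by subst h; rfl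

lemma app_congr {c : α → ι} {d : β → ι} (F : ∀ i, {x // c x = i} ≃ {y // d y = i})
    {i j : ι} (h : i = j) (z : α) (hz : c z = i) :
    ((F i) ⟨z, hz⟩ : β) = ((F j) ⟨z, h ▸ hz⟩ : β) := by subst h; rfl

def fiberPermEquiv (c : α → ι) (d : β → ι) :
    {σ : α ≃ β // ∀ x, d (σ x) = c x} ≃ ∀ i, {x // c x = i} ≃ {y // d y = i} where
  toFun σ i := Equiv.subtypeEquiv σ.1 fun x => by rw [σ.2 x]
  invFun F := ⟨{ toFun := fun x => (F (c x) ⟨x, rfl⟩ : β)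
                 invFun := fun y => ((F (d y)).symm ⟨y, rfl⟩ : α)
                 left_inv := by
                   intro x
                   dsimp only
                   have hz := (F (c x) ⟨x, rfl⟩).2
                   rw [symm_congr F hz, Subtype.coe_eta, Equiv.symm_apply_apply]
                 right_inv := by
                   intro y
                   dsimp only
                   have hz := ((F (d y)).symm ⟨y, rfl⟩).2
                   rw [app_congr F hz, Subtype.coe_eta, Equiv.apply_symm_apply] },
               fun x => (F (c x) ⟨x, rfl⟩).2⟩
  left_inv σ := by
    apply Subtype.ext; apply Equiv.ext; intro x; rfl
  right_inv F := by
    funext i; apply Equiv.ext; intro x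
    apply Subtype.ext
    show ((F (c ↑x) ⟨↑x, rfl⟩ : β) : β) = _
    rw [app_congr F x.2, Subtype.coe_eta]

lemma card_fiberPerm [Fintype α] [Fintype β] [Fintype ι] [DecidableEq α] [DecidableEq β] [DecidableEq ι] (c : α → ι) (d : β → ι)
    (h : ∀ i, Fintype.card {x // c x = i} = Fintype.card {y // d y = i}) :
    Fintype.card {σ : α ≃ β // ∀ x, d (σ x) = c x}
      = ∏ i, Nat.factorial (Fintype.card {x // c x = i}) := by
  classical
  rw [Fintype.card_congr (fiberPermEquiv c d), Fintype.card_pi]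
  exact Finset.prod_congr rfl fun i _ =>
    Fintype.card_equiv (Fintype.equivOfCardEq (h i))

end Aux


lemma filter_val (n : ℕ) (p : ℕ → Prop) [DecidablePred p] :
    (univ.filter fun x : Fin n => p ↑x).card = ((Finset.range n).filter p).card := by
  rw [← Finset.card_image_of_injective (univ.filter fun x : Fin n => p ↑x) Fin.val_injective]
  congr 1
  ext b
  simp only [Finset.mem_image, Finset.mem_filter, Finset.mem_univ, true_and, Finset.mem_range]
  constructor
  · rintro ⟨a, ha, rfl⟩; exact ⟨a.2, ha⟩
  · rintro ⟨hb, hp⟩; exact ⟨⟨b, hb⟩, hp, rfl⟩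

lemma card_fin_lt (n k : ℕ) (hk : k ≤ n) : Fintype.card {x : Fin n // (x:ℕ) < k} = k := by
  rw [Fintype.card_subtype, filter_val n (· < k)]
  rw [Finset.range_eq_Ico, Finset.Ico_filter_lt, Nat.card_Ico]
  omega

lemma card_fin_ge (n m : ℕ) : Fintype.card {x : Fin n // m ≤ (x:ℕ)} = n - m := by
  rw [Fintype.card_subtype, filter_val n (m ≤ ·)]
  rw [Finset.range_eq_Ico, Finset.Ico_filter_le, Nat.card_Ico]
  omega

lemma card_fin_ico (n a m : ℕ) (hm : m ≤ n) :
    Fintype.card {x : Fin n // a ≤ (x:ℕ) ∧ (x:ℕ) < m} = m - a := by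
  rw [Fintype.card_subtype, filter_val n (fun x => a ≤ x ∧ x < m)]
  have : ((Finset.range n).filter fun x => a ≤ x ∧ x < m) = Finset.Ico (max 0 a) (min n m) := by
    rw [← Finset.Ico_filter_le, ← Finset.Ico_filter_lt, ← Finset.range_eq_Ico, Finset.filter_filter]
    apply Finset.filter_congr; intro x _; tauto
  rw [this, Nat.card_Ico]
  omega

section Init
variable {n : ℕ}

def IsInit (σ : Equiv.Perm (Fin n)) (S : Finset (Fin n)) : Prop :=
  ∀ i : Fin n, σ i ∈ S ↔ (i : ℕ) < S.card

lemma init_subset {σ : Equiv.Perm (Fin n)} {S T : Finset (Fin n)}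
    (h1 : IsInit σ S) (h2 : IsInit σ T) (h : S.card ≤ T.card) : S ⊆ T := by
  intro x hx
  have e1 := h1 (σ.symm x); have e2 := h2 (σ.symm x)
  rw [Equiv.apply_symm_apply] at e1 e2
  exact e2.mpr (lt_of_lt_of_le (e1.mp hx) h)

lemma card_le_n (S : Finset (Fin n)) : S.card ≤ n := by
  simpa using Finset.card_le_card (Finset.subset_univ S)

lemma card_init (T : Finset (Fin n)) :
    Fintype.card {σ : Equiv.Perm (Fin n) // IsInit σ T}
      = (T.card)! * (n - T.card)! := by
  set k := T.card with hk
  have hkn : k ≤ n := card_le_n T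
  set c : Fin n → Bool := fun i => decide ((i : ℕ) < k) with hc
  set d : Fin n → Bool := fun y => decide (y ∈ T) with hd
  have e1 : {σ : Equiv.Perm (Fin n) // IsInit σ T}
      ≃ {σ : Fin n ≃ Fin n // ∀ x, d (σ x) = c x} :=
    Equiv.subtypeEquivRight fun σ => by
      simp only [IsInit, hc, hd, decide_eq_decide]
      rfl
  have hfib : ∀ b : Bool, Fintype.card {x : Fin n // c x = b}
      = Fintype.card {y : Fin n // d y = b} := by
    intro b
    have c1 : Fintype.card {x : Fin n // c x = true} = k := by
      rw [Fintype.card_congr (Equiv.subtypeEquivRight (q := fun x : Fin n => (x:ℕ) < k)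
        fun x => by simp [hc])]
      exact card_fin_lt n k hkn
    have d1 : Fintype.card {y : Fin n // d y = true} = k := by
      rw [Fintype.card_congr (Equiv.subtypeEquivRight (q := fun y : Fin n => y ∈ T)
        fun y => by simp [hd])]
      simpa [hk] using Fintype.card_coe T
    cases b
    · have c2 : Fintype.card {x : Fin n // c x = false} = n - k := by
        rw [Fintype.card_congr (Equiv.subtypeEquivRight (q := fun x : Fin n => k ≤ (x:ℕ))
          fun x => by simp [hc])]
        exact card_fin_ge n k
      have d2 : Fintype.card {y : Fin n // d y = false} = n - k := by
        rw [Fintype.card_congr (Equiv.subtypeEquivRight (q := fun y : Fin n => y ∉ T)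
          fun y => by simp [hd])]
        rw [Fintype.card_subtype_compl]
        simp [Fintype.card_coe, hk]
      rw [c2, d2]
    · rw [c1, d1]
  rw [Fintype.card_congr e1]
  have h3 : Fintype.card {σ : Fin n ≃ Fin n // ∀ x, d (σ x) = c x}
      = ∏ b : Bool, (Fintype.card {x : Fin n // c x = b})! := by
    convert card_fiberPerm c d hfib using 2
  rw [h3, Fintype.prod_bool]
  have c1 : Fintype.card {x : Fin n // c x = true} = k := by
    rw [Fintype.card_congr (Equiv.subtypeEquivRight (q := fun x : Fin n => (x:ℕ) < k)
      fun x => by simp [hc])]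
    exact card_fin_lt n k hkn
  have c2 : Fintype.card {x : Fin n // c x = false} = n - k := by
    rw [Fintype.card_congr (Equiv.subtypeEquivRight (q := fun x : Fin n => k ≤ (x:ℕ))
      fun x => by simp [hc])]
    exact card_fin_ge n k
  rw [c1, c2]

lemma card_init2 (S B : Finset (Fin n)) (hSB : S ⊆ B) :
    Fintype.card {σ : Equiv.Perm (Fin n) // IsInit σ S ∧ IsInit σ B}
      = (S.card)! * ((B.card - S.card)! * (n - B.card)!) := by
  set a := S.card with ha
  set m := B.card with hm
  have ham : a ≤ m := Finset.card_le_card hSB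
  have hmn : m ≤ n := card_le_n B
  set c : Fin n → Fin 3 := fun i => if (i : ℕ) < a then 0 else if (i : ℕ) < m then 1 else 2
    with hc
  set d : Fin n → Fin 3 := fun y => if y ∈ S then 0 else if y ∈ B then 1 else 2 with hd
  have hc0 : ∀ x : Fin n, c x = 0 ↔ (x : ℕ) < a := by
    intro x; simp only [hc]; split_ifs <;> simp_all <;> omega
  have hc1 : ∀ x : Fin n, c x = 1 ↔ (a ≤ (x : ℕ) ∧ (x : ℕ) < m) := by
    intro x; simp only [hc]; split_ifs <;> simp_all <;> omega
  have hc2 : ∀ x : Fin n, c x = 2 ↔ m ≤ (x : ℕ) := by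
    intro x; simp only [hc]; split_ifs <;> simp_all <;> omega
  have hd0 : ∀ y : Fin n, d y = 0 ↔ y ∈ S := by
    intro y; simp only [hd]; split_ifs <;> simp_all
  have hd1 : ∀ y : Fin n, d y = 1 ↔ (y ∉ S ∧ y ∈ B) := by
    intro y; simp only [hd]; split_ifs <;> simp_all
  have hd2 : ∀ y : Fin n, d y = 2 ↔ y ∉ B := by
    intro y; simp only [hd]; split_ifs with h1 h2
    · simp_all
      exact hSB h1
    · simp_all
    · simp_all
  have e1 : {σ : Equiv.Perm (Fin n) // IsInit σ S ∧ IsInit σ B}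
      ≃ {σ : Fin n ≃ Fin n // ∀ x, d (σ x) = c x} := by
    refine Equiv.subtypeEquivRight fun σ => ?_
    constructor
    · rintro ⟨h1, h2⟩ x
      rcases lt_or_ge ((x : ℕ)) a with h | h
      · rw [(hd0 _).mpr ((h1 x).mpr h), (hc0 x).mpr h]
      rcases lt_or_ge ((x : ℕ)) m with h' | h'
      · rw [(hd1 _).mpr ⟨fun hs => absurd ((h1 x).mp hs) (by omega), (h2 x).mpr h'⟩,
          (hc1 x).mpr ⟨h, h'⟩]
      · rw [(hd2 _).mpr (fun hb => absurd ((h2 x).mp hb) (by omega)), (hc2 x).mpr h']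
    · intro h
      constructor
      · intro x
        rw [← hd0 (σ x), h x, hc0 x]
      · intro x
        rw [show (σ x ∈ B) ↔ ¬ (d (σ x) = 2) by rw [hd2]; exact not_not.symm, h x, hc2 x]
        omega
  have han : a ≤ n := le_trans ham hmn
  have f0c : Fintype.card {x : Fin n // c x = 0} = a := by
    rw [Fintype.card_congr (Equiv.subtypeEquivRight (q := fun x : Fin n => (x:ℕ) < a) hc0)]
    exact card_fin_lt n a han
  have f1c : Fintype.card {x : Fin n // c x = 1} = m - a := by
    rw [Fintype.card_congr (Equiv.subtypeEquivRight
      (q := fun x : Fin n => a ≤ (x:ℕ) ∧ (x:ℕ) < m) hc1)]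
    exact card_fin_ico n a m hmn
  have f2c : Fintype.card {x : Fin n // c x = 2} = n - m := by
    rw [Fintype.card_congr (Equiv.subtypeEquivRight (q := fun x : Fin n => m ≤ (x:ℕ)) hc2)]
    exact card_fin_ge n m
  have f0d : Fintype.card {y : Fin n // d y = 0} = a := by
    rw [Fintype.card_congr (Equiv.subtypeEquivRight (q := fun y : Fin n => y ∈ S) hd0)]
    simpa [ha] using Fintype.card_coe S
  have f1d : Fintype.card {y : Fin n // d y = 1} = m - a := by
    rw [Fintype.card_congr (Equiv.subtypeEquivRight
      (q := fun y : Fin n => y ∉ S ∧ y ∈ B) hd1)]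
    rw [Fintype.card_subtype]
    have : (univ.filter fun y : Fin n => y ∉ S ∧ y ∈ B) = B \ S := by
      ext y; simp [Finset.mem_sdiff, and_comm]
    rw [this, Finset.card_sdiff_of_subset hSB]
  have f2d : Fintype.card {y : Fin n // d y = 2} = n - m := by
    rw [Fintype.card_congr (Equiv.subtypeEquivRight (q := fun y : Fin n => y ∉ B) hd2)]
    rw [Fintype.card_subtype_compl]
    simp [Fintype.card_coe, hm]
  have hfib : ∀ i : Fin 3, Fintype.card {x : Fin n // c x = i}
      = Fintype.card {y : Fin n // d y = i} := by
    intro i; fin_cases i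
    · exact f0c.trans f0d.symm
    · exact f1c.trans f1d.symm
    · exact f2c.trans f2d.symm
  rw [Fintype.card_congr e1]
  have h3 : Fintype.card {σ : Fin n ≃ Fin n // ∀ x, d (σ x) = c x}
      = ∏ i : Fin 3, (Fintype.card {x : Fin n // c x = i})! := by
    convert card_fiberPerm c d hfib using 2
  rw [h3, Fin.prod_univ_three, f0c, f1c, f2c, mul_assoc]

end Init

lemma choose_lower : ∀ N j : ℕ, 1 ≤ j → j + 1 ≤ N → N ≤ N.choose j := by
  intro N
  induction N with
  | zero => intro j h1 h2; omega
  | succ N ih =>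
    intro j h1 h2
    match j with
    | 1 => simp [Nat.choose_one_right]
    | (k+2) =>
      rcases eq_or_lt_of_le h2 with hN | hN
      · have hkN : k + 2 = N := by omega
        subst hkN
        rw [Nat.choose_succ_self_right]
      · rw [Nat.choose_succ_succ]
        have hA := ih (k+1) (by omega) (by omega)
        have hB : 0 < N.choose (k+1+1) := Nat.choose_pos (by omega)
        simp only [Nat.succ_eq_add_one]
        omega

lemma one_div_choose {n k : ℕ} (hk : k ≤ n) :
    (1:ℚ)/(n.choose k) = ((k ! * (n - k)! : ℕ) : ℚ)/(n ! : ℕ) := by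
  have h := Nat.choose_mul_factorial_mul_factorial hk
  have hc : (0:ℚ) < (n.choose k : ℚ) := by exact_mod_cast Nat.choose_pos hk
  have hn : (0:ℚ) < ((n ! : ℕ) : ℚ) := by exact_mod_cast Nat.factorial_pos n
  rw [div_eq_div_iff hc.ne' hn.ne']
  have h' : ((n.choose k : ℚ)) * ((k ! : ℕ) : ℚ) * (((n-k)! : ℕ) : ℚ) = ((n ! : ℕ) : ℚ) := by
    exact_mod_cast h
  push_cast at h' ⊢
  linear_combination -h'

theorem stmt_5 (n : ℕ) (M A : Finset (Finset (Fin n)))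
    (hM : IsAntichain (· ⊆ ·) (M : Set (Finset (Fin n))))
    (hA : IsAntichain (· ⊆ ·) (A : Set (Finset (Fin n))))
    (hdisj : Disjoint M A)
    (hfull : (Finset.univ : Finset (Fin n)) ∉ M)
    (f : Finset (Fin n) → Finset (Fin n))
    (hf : ∀ S ∈ A, f S ∈ M ∧ S ⊂ f S ∧ ∀ T ∈ M, S ⊂ T → T = f S) :
    ∑ S ∈ M, (1 : ℚ) / (n.choose S.card)
      + ∑ S ∈ A, (1 : ℚ) / (n.choose S.card) * (1 - 1 / ((n : ℚ) - S.card)) ≤ 1 := by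
  classical
  have hn0 : (0:ℚ) < ((n ! : ℕ) : ℚ) := by exact_mod_cast Nat.factorial_pos n
  have hcnt : ∀ T : Finset (Fin n),
      ((univ : Finset (Equiv.Perm (Fin n))).filter fun σ => IsInit σ T).card
        = (T.card)! * (n - T.card)! := by
    intro T
    have h := card_init (n := n) T
    rwa [Fintype.card_subtype] at h
  have hcnt2 : ∀ S ∈ A,
      ((univ : Finset (Equiv.Perm (Fin n))).filter fun σ => IsInit σ S ∧ IsInit σ (f S)).card
        = (S.card)! * (((f S).card - S.card)! * (n - (f S).card)!) := by
    intro S hS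
    have h := card_init2 (n := n) S (f S) (hf S hS).2.1.subset
    rwa [Fintype.card_subtype] at h
  have key : ∀ σ : Equiv.Perm (Fin n),
      (M.filter fun T => IsInit σ T).card + (A.filter fun S => IsInit σ S).card
        ≤ 1 + (A.filter fun S => IsInit σ S ∧ IsInit σ (f S)).card := by
    intro σ
    have comp : ∀ {S T : Finset (Fin n)}, IsInit σ S → IsInit σ T → S ⊆ T ∨ T ⊆ S := by
      intro S T h1 h2
      rcases le_total S.card T.card with h | h
      · exact Or.inl (init_subset h1 h2 h)
      · exact Or.inr (init_subset h2 h1 h)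
    have hm1 : (M.filter fun T => IsInit σ T).card ≤ 1 := by
      refine Finset.card_le_one.mpr ?_
      intro x hx y hy
      simp only [Finset.mem_filter] at hx hy
      by_contra hne
      rcases comp hx.2 hy.2 with h | h
      · exact hM hx.1 hy.1 hne h
      · exact hM hy.1 hx.1 (Ne.symm hne) h
    have ha1 : (A.filter fun S => IsInit σ S).card ≤ 1 := by
      refine Finset.card_le_one.mpr ?_
      intro x hx y hy
      simp only [Finset.mem_filter] at hx hy
      by_contra hne
      rcases comp hx.2 hy.2 with h | h
      · exact hA hx.1 hy.1 hne h
      · exact hA hy.1 hx.1 (Ne.symm hne) h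
    rcases Finset.eq_empty_or_nonempty (A.filter fun S => IsInit σ S) with he | hne
    · rw [he, Finset.card_empty]
      omega
    · obtain ⟨S, hS⟩ := hne
      simp only [Finset.mem_filter] at hS
      obtain ⟨hSA, hSinit⟩ := hS
      rcases Finset.eq_empty_or_nonempty (M.filter fun T => IsInit σ T) with he2 | hne2
      · rw [he2, Finset.card_empty]
        omega
      · obtain ⟨T, hT⟩ := hne2
        simp only [Finset.mem_filter] at hT
        obtain ⟨hTM, hTinit⟩ := hT
        have hneq : S ≠ T := by
          intro h
          exact Finset.disjoint_left.mp hdisj hTM (h ▸ hSA)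
        obtain ⟨hfSM, hfSss, huniq⟩ := hf S hSA
        rcases comp hSinit hTinit with h | h
        · have hssub : S ⊂ T := h.ssubset_of_ne hneq
          have hTfS : T = f S := huniq T hTM hssub
          have hmem : S ∈ A.filter fun S => IsInit σ S ∧ IsInit σ (f S) :=
            Finset.mem_filter.mpr ⟨hSA, hSinit, hTfS ▸ hTinit⟩
          have habf : 1 ≤ (A.filter fun S => IsInit σ S ∧ IsInit σ (f S)).card :=
            Finset.card_pos.mpr ⟨S, hmem⟩
          omega
        · exfalso
          have hTfS : T ⊆ f S := h.trans hfSss.subset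
          have hTne : T ≠ f S := by
            intro hEq
            exact hfSss.2 (hEq ▸ h)
          exact hM hTM hfSM hTne hTfS
  have main_nat :
      ((∑ T ∈ M, (T.card)! * (n - T.card)!) +
        ∑ S ∈ A, (S.card)! * (n - S.card)!)
        ≤ n ! + ∑ S ∈ A, (S.card)! * (((f S).card - S.card)! * (n - (f S).card)!) := by
    have e1 : ∑ T ∈ M, (T.card)! * (n - T.card)!
        = ∑ σ : Equiv.Perm (Fin n), (M.filter fun T => IsInit σ T).card := by
      calc ∑ T ∈ M, (T.card)! * (n - T.card)!
          = ∑ T ∈ M, ((univ : Finset (Equiv.Perm (Fin n))).filter fun σ => IsInit σ T).card :=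
            Finset.sum_congr rfl fun T _ => (hcnt T).symm
        _ = ∑ σ : Equiv.Perm (Fin n), (M.filter fun T => IsInit σ T).card := by
            simp only [Finset.card_filter]
            exact Finset.sum_comm
    have e2 : ∑ S ∈ A, (S.card)! * (n - S.card)!
        = ∑ σ : Equiv.Perm (Fin n), (A.filter fun S => IsInit σ S).card := by
      calc ∑ S ∈ A, (S.card)! * (n - S.card)!
          = ∑ S ∈ A, ((univ : Finset (Equiv.Perm (Fin n))).filter fun σ => IsInit σ S).card :=
            Finset.sum_congr rfl fun S _ => (hcnt S).symm
        _ = _ := by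
            simp only [Finset.card_filter]
            exact Finset.sum_comm
    have e3 : ∑ S ∈ A, (S.card)! * (((f S).card - S.card)! * (n - (f S).card)!)
        = ∑ σ : Equiv.Perm (Fin n), (A.filter fun S => IsInit σ S ∧ IsInit σ (f S)).card := by
      calc ∑ S ∈ A, (S.card)! * (((f S).card - S.card)! * (n - (f S).card)!)
          = ∑ S ∈ A, ((univ : Finset (Equiv.Perm (Fin n))).filter
              fun σ => IsInit σ S ∧ IsInit σ (f S)).card :=
            Finset.sum_congr rfl fun S hS => (hcnt2 S hS).symm
        _ = _ := by
            simp only [Finset.card_filter]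
            exact Finset.sum_comm
    rw [e1, e2, e3, ← Finset.sum_add_distrib]
    calc ∑ σ : Equiv.Perm (Fin n),
          ((M.filter fun T => IsInit σ T).card + (A.filter fun S => IsInit σ S).card)
        ≤ ∑ σ : Equiv.Perm (Fin n),
            (1 + (A.filter fun S => IsInit σ S ∧ IsInit σ (f S)).card) :=
          Finset.sum_le_sum fun σ _ => key σ
      _ = n ! + ∑ σ : Equiv.Perm (Fin n),
            (A.filter fun S => IsInit σ S ∧ IsInit σ (f S)).card := by
          rw [Finset.sum_add_distrib, Finset.sum_const, Finset.card_univ, Fintype.card_perm,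
            Fintype.card_fin, smul_eq_mul, mul_one]
  have hMterm : ∀ T ∈ M, (1:ℚ)/(n.choose T.card)
      = (((T.card)! * (n - T.card)! : ℕ) : ℚ)/((n ! : ℕ) : ℚ) :=
    fun T _ => one_div_choose (card_le_n T)
  have hAterm : ∀ S ∈ A, (1:ℚ)/(n.choose S.card) * (1 - 1/((n:ℚ) - S.card))
      ≤ ((((S.card)! * (n - S.card)! : ℕ) : ℚ)
          - (((S.card)! * (((f S).card - S.card)! * (n - (f S).card)!) : ℕ) : ℚ))
            /((n ! : ℕ) : ℚ) := by
    intro S hS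
    obtain ⟨hfSM, hss, _⟩ := hf S hS
    have ham : S.card < (f S).card := Finset.card_lt_card hss
    have hmn : (f S).card < n := by
      rcases lt_or_eq_of_le (card_le_n (f S)) with h | h
      · exact h
      · exfalso
        apply hfull
        have hu := (Finset.card_eq_iff_eq_univ (f S)).mp (by rw [h, Fintype.card_fin])
        rwa [hu] at hfSM
    have han : S.card < n := lt_trans ham hmn
    set a := S.card with haa
    set m := (f S).card with hmm
    have hnat : (m - a)! * (n - m)! * (n - a) ≤ (n - a)! := by
      have h1 : 1 ≤ m - a := by omega
      have h2 : (m - a) + 1 ≤ n - a := by omega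
      have hj : m - a ≤ n - a := by omega
      have hcc := Nat.choose_mul_factorial_mul_factorial hj
      have hcl := choose_lower (n - a) (m - a) h1 h2
      have hnm : (n - a) - (m - a) = n - m := by omega
      rw [hnm] at hcc
      calc (m - a)! * (n - m)! * (n - a)
          ≤ (m - a)! * (n - m)! * ((n - a).choose (m - a)) := Nat.mul_le_mul_left _ hcl
        _ = (n - a)! := by rw [← hcc]; ring
    rw [one_div_choose han.le]
    have hna : (0:ℚ) < (n:ℚ) - a := by
      have : (a:ℚ) < n := by exact_mod_cast han
      linarith
    have hcast : ((n:ℚ) - a) = (((n - a : ℕ)) : ℚ) := by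
      rw [Nat.cast_sub han.le]
    set XQ : ℚ := (((a)! * (n - a)! : ℕ) : ℚ) with hXQ
    set YQ : ℚ := (((a)! * ((m - a)! * (n - m)!) : ℕ) : ℚ) with hYQ
    have hXY : YQ * ((n:ℚ) - a) ≤ XQ := by
      rw [hcast, hXQ, hYQ]
      have hineq : (a)! * ((m - a)! * (n - m)!) * (n - a) ≤ (a)! * (n - a)! := by
        calc (a)! * ((m - a)! * (n - m)!) * (n - a)
            = (a)! * ((m - a)! * (n - m)! * (n - a)) := by ring
          _ ≤ (a)! * (n - a)! := Nat.mul_le_mul_left _ hnat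
      exact_mod_cast hineq
    have h5 : YQ ≤ XQ/((n:ℚ) - a) := (le_div_iff₀ hna).mpr hXY
    have e : XQ*(1 - 1/((n:ℚ) - a)) = XQ - XQ/((n:ℚ) - a) := by ring
    rw [div_mul_eq_mul_div]
    exact (div_le_div_iff_of_pos_right hn0).mpr (by linarith [h5, e.le, e.ge])
  have step1 : ∑ S ∈ M, (1 : ℚ) / (n.choose S.card)
      + ∑ S ∈ A, (1 : ℚ) / (n.choose S.card) * (1 - 1 / ((n : ℚ) - S.card))
      ≤ (∑ T ∈ M, (((T.card)! * (n - T.card)! : ℕ) : ℚ))/((n ! : ℕ) : ℚ)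
        + (∑ S ∈ A, ((((S.card)! * (n - S.card)! : ℕ) : ℚ)
            - (((S.card)! * (((f S).card - S.card)! * (n - (f S).card)!) : ℕ) : ℚ)))
              /((n ! : ℕ) : ℚ) := by
    rw [Finset.sum_div, Finset.sum_div]
    exact add_le_add (le_of_eq (Finset.sum_congr rfl hMterm)) (Finset.sum_le_sum hAterm)
  refine step1.trans ?_
  rw [← add_div, div_le_one hn0]
  rw [Finset.sum_sub_distrib]
  have hc : ((∑ T ∈ M, (T.card)! * (n - T.card)! : ℕ) : ℚ)
      + ((∑ S ∈ A, (S.card)! * (n - S.card)! : ℕ) : ℚ)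
      ≤ ((n ! : ℕ) : ℚ)
        + ((∑ S ∈ A, (S.card)! * (((f S).card - S.card)! * (n - (f S).card)!) : ℕ) : ℚ) := by
    exact_mod_cast main_nat
  push_cast at hc
  push_cast
  linarith
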